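/- arXiv:2507.04924 — 2 statements merged into one kernel-verified Lean document; each statement's English description precedes it below -/
import Mathlib

section
/- Let N ≥ 1 be an integer, let H be a symmetric real N×N matrix, let η ∈ ℝ^N with ‖η‖ ≤ 1, and let e, r be real numbers with e > 1 and r ≥ 2. Then Σ_{i,j=1}^N H_{ij}² + (e+r−4)·‖Hη‖² + (e−2)(r−2)·⟨Hη, η⟩² ≥ σ·Σ_{i,j=1}^N H_{ij}², where σ = min{1, e−1}. -/
/-- Pointwise algebraic inequality (Proposition `pro:pointwise`):
for a symmetric `N × N` real matrix `H`, a vector `η` with Euclidean norm at most `1`,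
and reals `e > 1`, `r ≥ 2`,
`trace(H²) + (e+r-4)‖Hη‖² + (e-2)(r-2)⟨Hη,η⟩² ≥ min{1, e-1} · trace(H²)`,
where `trace(H²) = ∑ᵢⱼ Hᵢⱼ²`, `‖Hη‖² = ∑ᵢ (Hη)ᵢ²` and `⟨Hη,η⟩ = ∑ᵢ (Hη)ᵢ ηᵢ`. -/
theorem stmt0 (N : ℕ) (hN : 1 ≤ N) (H : Matrix (Fin N) (Fin N) ℝ) (hH : H.IsSymm)
    (η : Fin N → ℝ) (hη : ∑ i, η i ^ 2 ≤ 1)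
    (e r : ℝ) (he : 1 < e) (hr : 2 ≤ r) :
    (∑ i, ∑ j, H i j ^ 2) + (e + r - 4) * (∑ i, (H.mulVec η i) ^ 2)
        + (e - 2) * (r - 2) * (∑ i, H.mulVec η i * η i) ^ 2
      ≥ min 1 (e - 1) * (∑ i, ∑ j, H i j ^ 2) := by
  have hη0 : (0:ℝ) ≤ ∑ i, η i ^ 2 := Finset.sum_nonneg (fun i _ => sq_nonneg _)
  set T := ∑ i, ∑ j, H i j ^ 2 with hT
  set A := ∑ i, (H.mulVec η i) ^ 2 with hA
  set B := (∑ i, H.mulVec η i * η i) ^ 2 with hB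
  have hApos : (0:ℝ) ≤ A := Finset.sum_nonneg fun i _ => sq_nonneg _
  have hBpos : (0:ℝ) ≤ B := sq_nonneg _
  have hAT : A ≤ T := by
    apply Finset.sum_le_sum
    intro i _
    have h1 : (∑ j, H i j * η j) ^ 2 ≤ (∑ j, H i j ^ 2) * (∑ j, η j ^ 2) :=
      Finset.sum_mul_sq_le_sq_mul_sq _ _ _
    have hHn : (0:ℝ) ≤ ∑ j, H i j ^ 2 := Finset.sum_nonneg fun j _ => sq_nonneg _
    have h2 : (∑ j, H i j ^ 2) * (∑ j, η j ^ 2) ≤ ∑ j, H i j ^ 2 := by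
      nlinarith
    have hmv : H.mulVec η i = ∑ j, H i j * η j := by
      simp [Matrix.mulVec, dotProduct]
    rw [hmv]
    exact h1.trans h2
  have hBA : B ≤ A := by
    have h1 : (∑ i, H.mulVec η i * η i) ^ 2 ≤ A * (∑ i, η i ^ 2) :=
      Finset.sum_mul_sq_le_sq_mul_sq _ _ _
    nlinarith
  rcases le_total e 2 with h | h
  · have hmin : min 1 (e-1) = e-1 := min_eq_right (by linarith)
    rw [hmin]
    nlinarith [mul_nonneg (mul_nonneg (by linarith : (0:ℝ) ≤ 2 - e) (by linarith : (0:ℝ) ≤ r - 2)) (by linarith : (0:ℝ) ≤ A - B),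
      mul_nonneg (by linarith : (0:ℝ) ≤ 2 - e) (by linarith : (0:ℝ) ≤ T - A),
      mul_nonneg (mul_nonneg (by linarith : (0:ℝ) ≤ e - 1) (by linarith : (0:ℝ) ≤ r - 2)) hApos]
  · have hmin : min 1 (e-1) = 1 := min_eq_left (by linarith)
    rw [hmin]
    nlinarith [mul_nonneg (by linarith : (0:ℝ) ≤ e + r - 4) hApos,
      mul_nonneg (mul_nonneg (by linarith : (0:ℝ) ≤ e - 2) (by linarith : (0:ℝ) ≤ r - 2)) hBpos]
end

section
/- Let N ≥ 1 be an integer, ε ∈ (0,1), α ∈ (0,1], and let Q ⊆ ℝ^N × ℝ. Suppose p, q : Q → ℝ take values in [m, M] with 1 ≤ m ≤ M and are Lipschitz with constant L with respect to the distance |x₁−x₂| + |t₁−t₂|, and suppose a, b : Q → [0, K] satisfy the parabolic Hölder condition |a(z₁)−a(z₂)| ≤ K₀·(|x₁−x₂|^α + |t₁−t₂|^{α/2}) for all z₁ = (x₁,t₁), z₂ = (x₂,t₂) ∈ Q, and likewise for b. Then there exists a constant C > 0, depending only on ε, α, L, K, K₀, m, M, N, such that for all z₁, z₂ ∈ Q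 with |x₁−x₂| + |t₁−t₂| ≤ 1 and all ξ ∈ ℝ^N: ‖𝓕_ε(z₁,ξ)ξ − 𝓕_ε(z₂,ξ)ξ‖ ≤ C·(|x₁−x₂|^α + |t₁−t₂|^{α/2})·(1 + log(1+‖ξ‖²))·(1 + ‖ξ‖^{M−1}). -/
lemma aux_exp_diff (x y : ℝ) :
    |Real.exp x - Real.exp y| ≤ |x - y| * max (Real.exp x) (Real.exp y) := by
  wlog h : y ≤ x generalizing x y
  · rw [abs_sub_comm, abs_sub_comm x y, max_comm]; exact this y x (le_of_not_ge h)
  have h1 : Real.exp (y - x) * Real.exp x = Real.exp y := by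
    rw [← Real.exp_add]; ring_nf
  have h2 := Real.add_one_le_exp (y - x)
  have h3 := Real.exp_pos x
  have h4 : Real.exp y ≤ Real.exp x := Real.exp_le_exp.2 h
  rw [abs_of_nonneg (by linarith), abs_of_nonneg (by linarith), max_eq_left h4]
  nlinarith

lemma aux_rpow_diff {s : ℝ} (hs : 0 < s) (r₁ r₂ : ℝ) :
    |s ^ r₁ - s ^ r₂| ≤ |r₁ - r₂| * |Real.log s| * max (s ^ r₁) (s ^ r₂) := by
  rw [Real.rpow_def_of_pos hs, Real.rpow_def_of_pos hs]
  calc |Real.exp (Real.log s * r₁) - Real.exp (Real.log s * r₂)|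
      ≤ |Real.log s * r₁ - Real.log s * r₂| *
          max (Real.exp (Real.log s * r₁)) (Real.exp (Real.log s * r₂)) :=
        aux_exp_diff _ _
    _ = |r₁ - r₂| * |Real.log s| *
          max (Real.exp (Real.log s * r₁)) (Real.exp (Real.log s * r₂)) := by
        rw [← mul_sub, abs_mul]; ring

lemma aux_key_bound {ε t p M : ℝ} (hε0 : 0 < ε) (hε1 : ε ≤ 1) (ht : 0 ≤ t)
    (h1p : 1 ≤ p) (hpM : p ≤ M) :
    (ε ^ 2 + t ^ 2) ^ ((p - 2) / 2) * t ≤ 2 ^ (M - 1) * (1 + t ^ (M - 1)) := by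
  have hs : (0:ℝ) < ε ^ 2 + t ^ 2 := by positivity
  have hM1 : (0:ℝ) ≤ M - 1 := by linarith
  have h1 : t ≤ (ε ^ 2 + t ^ 2) ^ ((1:ℝ)/2) := by
    rw [← Real.sqrt_eq_rpow]
    have := Real.sqrt_le_sqrt (show t ^ 2 ≤ ε ^ 2 + t ^ 2 by nlinarith)
    rwa [Real.sqrt_sq ht] at this
  have h2 : (ε ^ 2 + t ^ 2) ^ ((p - 2) / 2) * t
      ≤ (ε ^ 2 + t ^ 2) ^ ((p - 1) / 2) := by
    calc (ε ^ 2 + t ^ 2) ^ ((p - 2) / 2) * t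
        ≤ (ε ^ 2 + t ^ 2) ^ ((p - 2) / 2) * (ε ^ 2 + t ^ 2) ^ ((1:ℝ)/2) := by
          have := Real.sqrt_le_sqrt (le_of_lt hs)
          exact mul_le_mul_of_nonneg_left h1 (Real.rpow_nonneg hs.le _)
      _ = (ε ^ 2 + t ^ 2) ^ ((p - 1) / 2) := by
          rw [← Real.rpow_add hs]; ring_nf
  have h3 : (ε ^ 2 + t ^ 2) ^ ((p - 1) / 2) ≤ (1 + t ^ 2) ^ ((p - 1) / 2) := by
    apply Real.rpow_le_rpow hs.le (by nlinarith) (by linarith)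
  have h4 : (1 + t ^ 2) ^ ((p - 1) / 2) ≤ (1 + t ^ 2) ^ ((M - 1) / 2) :=
    Real.rpow_le_rpow_of_exponent_le (by nlinarith) (by linarith)
  have h5 : (1 + t ^ 2) ^ ((M - 1) / 2) ≤ (1 + t) ^ (M - 1) := by
    have : (1 + t ^ 2) ^ ((M - 1) / 2) ≤ ((1 + t) ^ 2) ^ ((M - 1) / 2) :=
      Real.rpow_le_rpow (by positivity) (by nlinarith) (by linarith)
    refine this.trans_eq ?_
    rw [← Real.rpow_natCast (1 + t) 2, ← Real.rpow_mul (by linarith)]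
    congr 1
    push_cast
    ring
  have h6 : (1 + t) ^ (M - 1) ≤ 2 ^ (M - 1) * (1 + t ^ (M - 1)) := by
    rcases le_total t 1 with htle | htle
    · have : (1 + t) ^ (M - 1) ≤ (2:ℝ) ^ (M - 1) :=
        Real.rpow_le_rpow (by linarith) (by linarith) hM1
      have h7 : (0:ℝ) ≤ t ^ (M - 1) := Real.rpow_nonneg ht _
      nlinarith [Real.rpow_nonneg (show (0:ℝ) ≤ 2 by norm_num) (M - 1)]
    · have : (1 + t) ^ (M - 1) ≤ (2 * t) ^ (M - 1) :=
        Real.rpow_le_rpow (by linarith) (by linarith) hM1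
      rw [Real.mul_rpow (by norm_num) ht] at this
      have h7 : (0:ℝ) ≤ (2:ℝ) ^ (M - 1) := Real.rpow_nonneg (by norm_num) _
      nlinarith
  linarith

lemma aux_log_bound {ε t : ℝ} (hε0 : 0 < ε) (hε1 : ε ≤ 1) :
    |Real.log (ε ^ 2 + t ^ 2)| ≤ 2 * |Real.log ε| + Real.log (1 + t ^ 2) := by
  have hs : (0:ℝ) < ε ^ 2 + t ^ 2 := by positivity
  have hG : 0 ≤ Real.log (1 + t ^ 2) := Real.log_nonneg (by nlinarith)
  have hub : Real.log (ε ^ 2 + t ^ 2) ≤ Real.log (1 + t ^ 2) :=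
    Real.log_le_log hs (by nlinarith)
  have hlb : Real.log (ε ^ 2) ≤ Real.log (ε ^ 2 + t ^ 2) :=
    Real.log_le_log (by positivity) (by nlinarith)
  have heq : Real.log (ε ^ 2) = 2 * Real.log ε := by
    rw [show ε ^ 2 = ε * ε by ring, Real.log_mul hε0.ne' hε0.ne']; ring
  rw [heq] at hlb
  rw [abs_le]
  constructor <;> nlinarith [abs_nonneg (Real.log ε), neg_abs_le (Real.log ε), le_abs_self (Real.log ε)]

lemma aux_self_le_rpow {u β : ℝ} (hu0 : 0 ≤ u) (hu1 : u ≤ 1) (hβ0 : 0 < β) (hβ1 : β ≤ 1) :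
    u ≤ u ^ β := by
  rcases eq_or_lt_of_le hu0 with h | h
  · rw [← h, Real.zero_rpow hβ0.ne']
  · calc u = u ^ (1:ℝ) := (Real.rpow_one u).symm
      _ ≤ u ^ β := Real.rpow_le_rpow_of_exponent_ge h hu1 hβ1

set_option maxHeartbeats 1000000 in
lemma aux_term_bound {ε M L K K₀ p₁ p₂ a₁ a₂ t D d : ℝ}
    (hε0 : 0 < ε) (hε1 : ε ≤ 1) (ht : 0 ≤ t)
    (h1p₁ : 1 ≤ p₁) (hp₁M : p₁ ≤ M) (h1p₂ : 1 ≤ p₂) (hp₂M : p₂ ≤ M)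
    (ha₂0 : 0 ≤ a₂) (ha₂K : a₂ ≤ K)
    (hD : 0 ≤ D) (hd : 0 ≤ d) (hdD : d ≤ D)
    (hpd : |p₁ - p₂| ≤ L * d) (had : |a₁ - a₂| ≤ K₀ * D) :
    |(a₁ + ε) * (ε ^ 2 + t ^ 2) ^ ((p₁ - 2) / 2)
        - (a₂ + ε) * (ε ^ 2 + t ^ 2) ^ ((p₂ - 2) / 2)| * t
      ≤ ((|K₀| + (|K| + 1) * |L| * (2 * |Real.log ε| + 1)) * 2 ^ (M - 1)) * D
          * (1 + Real.log (1 + t ^ 2)) * (1 + t ^ (M - 1)) := by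
  have hs : (0:ℝ) < ε ^ 2 + t ^ 2 := by positivity
  set s := ε ^ 2 + t ^ 2 with hs_def
  set G := Real.log (1 + t ^ 2) with hG_def
  set A := |Real.log ε| with hA_def
  set E := (2:ℝ) ^ (M - 1) * (1 + t ^ (M - 1)) with hE_def
  have hG : 0 ≤ G := Real.log_nonneg (by nlinarith)
  have hA : 0 ≤ A := abs_nonneg _
  have hE : 0 ≤ E := by
    have := Real.rpow_nonneg (show (0:ℝ) ≤ 2 by norm_num) (M - 1)
    have := Real.rpow_nonneg ht (M - 1)
    nlinarith
  -- key bounds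
  have f1 : s ^ ((p₁ - 2) / 2) * t ≤ E := aux_key_bound hε0 hε1 ht h1p₁ hp₁M
  have f2 : s ^ ((p₂ - 2) / 2) * t ≤ E := aux_key_bound hε0 hε1 ht h1p₂ hp₂M
  have fmax : max (s ^ ((p₁ - 2) / 2)) (s ^ ((p₂ - 2) / 2)) * t ≤ E := by
    rcases max_cases (s ^ ((p₁ - 2) / 2)) (s ^ ((p₂ - 2) / 2)) with ⟨h, _⟩ | ⟨h, _⟩ <;>
      rw [h] <;> assumption
  have flog : |Real.log s| ≤ 2 * A + G := aux_log_bound hε0 hε1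
  have hr : |(p₁ - 2) / 2 - (p₂ - 2) / 2| ≤ |L| * D := by
    have h1 : |(p₁ - 2) / 2 - (p₂ - 2) / 2| = |p₁ - p₂| / 2 := by
      rw [show (p₁ - 2) / 2 - (p₂ - 2) / 2 = (p₁ - p₂) / 2 by ring, abs_div]
      norm_num
    have h2 : L * d ≤ |L| * D := by
      calc L * d ≤ |L| * d := mul_le_mul_of_nonneg_right (le_abs_self L) hd
        _ ≤ |L| * D := mul_le_mul_of_nonneg_left hdD (abs_nonneg L)
    rw [h1]; linarith [abs_nonneg (p₁ - p₂)]
  have frd : |s ^ ((p₁ - 2) / 2) - s ^ ((p₂ - 2) / 2)| * t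
      ≤ (|L| * D * (2 * A + G)) * E := by
    have h1 := aux_rpow_diff hs ((p₁ - 2) / 2) ((p₂ - 2) / 2)
    have hmaxnn : 0 ≤ max (s ^ ((p₁ - 2) / 2)) (s ^ ((p₂ - 2) / 2)) :=
      le_max_of_le_left (Real.rpow_nonneg hs.le _)
    calc |s ^ ((p₁ - 2) / 2) - s ^ ((p₂ - 2) / 2)| * t
        ≤ (|(p₁ - 2) / 2 - (p₂ - 2) / 2| * |Real.log s|
            * max (s ^ ((p₁ - 2) / 2)) (s ^ ((p₂ - 2) / 2))) * t :=
          mul_le_mul_of_nonneg_right h1 ht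
      _ = (|(p₁ - 2) / 2 - (p₂ - 2) / 2| * |Real.log s|)
            * (max (s ^ ((p₁ - 2) / 2)) (s ^ ((p₂ - 2) / 2)) * t) := by ring
      _ ≤ (|L| * D * (2 * A + G)) * E := by
          apply mul_le_mul _ fmax (mul_nonneg hmaxnn ht)
            (by have := abs_nonneg L; have := mul_nonneg (mul_nonneg this hD) (by linarith : (0:ℝ) ≤ 2 * A + G); linarith)
          exact mul_le_mul hr flog (abs_nonneg _)
            (mul_nonneg (abs_nonneg L) hD)
  -- decompose
  have hdecomp : (a₁ + ε) * s ^ ((p₁ - 2) / 2) - (a₂ + ε) * s ^ ((p₂ - 2) / 2)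
      = (a₁ - a₂) * s ^ ((p₁ - 2) / 2)
        + (a₂ + ε) * (s ^ ((p₁ - 2) / 2) - s ^ ((p₂ - 2) / 2)) := by ring
  have htri : |(a₁ + ε) * s ^ ((p₁ - 2) / 2) - (a₂ + ε) * s ^ ((p₂ - 2) / 2)| * t
      ≤ |a₁ - a₂| * (s ^ ((p₁ - 2) / 2) * t)
        + (a₂ + ε) * (|s ^ ((p₁ - 2) / 2) - s ^ ((p₂ - 2) / 2)| * t) := by
    rw [hdecomp]
    have h1 := abs_add_le ((a₁ - a₂) * s ^ ((p₁ - 2) / 2))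
      ((a₂ + ε) * (s ^ ((p₁ - 2) / 2) - s ^ ((p₂ - 2) / 2)))
    rw [abs_mul, abs_mul, abs_of_nonneg (Real.rpow_nonneg hs.le _),
      abs_of_nonneg (by linarith : (0:ℝ) ≤ a₂ + ε)] at h1
    nlinarith [mul_le_mul_of_nonneg_right h1 ht]
  have piece1 : |a₁ - a₂| * (s ^ ((p₁ - 2) / 2) * t) ≤ (|K₀| * D) * E := by
    apply mul_le_mul _ f1 (mul_nonneg (Real.rpow_nonneg hs.le _) ht)
      (mul_nonneg (abs_nonneg K₀) hD)
    calc |a₁ - a₂| ≤ K₀ * D := had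
      _ ≤ |K₀| * D := mul_le_mul_of_nonneg_right (le_abs_self K₀) hD
  have piece2 : (a₂ + ε) * (|s ^ ((p₁ - 2) / 2) - s ^ ((p₂ - 2) / 2)| * t)
      ≤ (|K| + 1) * ((|L| * D * (2 * A + G)) * E) := by
    apply mul_le_mul _ frd (mul_nonneg (abs_nonneg _) ht)
      (by have := abs_nonneg K; linarith)
    have := le_abs_self K
    linarith
  have hscalar : |K₀| + (|K| + 1) * |L| * (2 * A + G)
      ≤ (|K₀| + (|K| + 1) * |L| * (2 * A + 1)) * (1 + G) := by
    have hc : 0 ≤ (|K| + 1) * |L| := by positivity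
    nlinarith [mul_nonneg hc hA, mul_nonneg (abs_nonneg K₀) hG,
      mul_nonneg (mul_nonneg hc hA) hG, mul_nonneg hc hG]
  have hDE : 0 ≤ D * E := mul_nonneg hD hE
  calc |(a₁ + ε) * s ^ ((p₁ - 2) / 2) - (a₂ + ε) * s ^ ((p₂ - 2) / 2)| * t
      ≤ (|K₀| * D) * E + (|K| + 1) * ((|L| * D * (2 * A + G)) * E) := by linarith
    _ = (|K₀| + (|K| + 1) * |L| * (2 * A + G)) * (D * E) := by ring
    _ ≤ ((|K₀| + (|K| + 1) * |L| * (2 * A + 1)) * (1 + G)) * (D * E) :=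
        mul_le_mul_of_nonneg_right hscalar hDE
    _ = ((|K₀| + (|K| + 1) * |L| * (2 * A + 1)) * 2 ^ (M - 1)) * D
          * (1 + G) * (1 + t ^ (M - 1)) := by rw [hE_def]; ring


set_option maxHeartbeats 1000000 in
/-- Continuity in `z = (x,t)` of the regularized double-phase flux
`𝓕_ε(z,ξ)ξ = (a(z)+ε)(ε²+‖ξ‖²)^((p(z)-2)/2) ξ + (b(z)+ε)(ε²+‖ξ‖²)^((q(z)-2)/2) ξ`
(structure condition (iii) verified in Section 3 of the paper). -/
theorem stmt1 (N : ℕ) (hN : 1 ≤ N) (ε α : ℝ)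
    (hε : ε ∈ Set.Ioo (0:ℝ) 1) (hα : α ∈ Set.Ioc (0:ℝ) 1)
    (Q : Set (EuclideanSpace ℝ (Fin N) × ℝ))
    (p q a b : EuclideanSpace ℝ (Fin N) × ℝ → ℝ)
    (m M L K K₀ : ℝ) (hm : 1 ≤ m) (hmM : m ≤ M)
    (hp : ∀ z ∈ Q, p z ∈ Set.Icc m M) (hq : ∀ z ∈ Q, q z ∈ Set.Icc m M)
    (hpL : ∀ z₁ ∈ Q, ∀ z₂ ∈ Q, |p z₁ - p z₂| ≤ L * (‖z₁.1 - z₂.1‖ + |z₁.2 - z₂.2|))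
    (hqL : ∀ z₁ ∈ Q, ∀ z₂ ∈ Q, |q z₁ - q z₂| ≤ L * (‖z₁.1 - z₂.1‖ + |z₁.2 - z₂.2|))
    (ha : ∀ z ∈ Q, a z ∈ Set.Icc (0:ℝ) K) (hb : ∀ z ∈ Q, b z ∈ Set.Icc (0:ℝ) K)
    (haH : ∀ z₁ ∈ Q, ∀ z₂ ∈ Q,
      |a z₁ - a z₂| ≤ K₀ * (‖z₁.1 - z₂.1‖ ^ α + |z₁.2 - z₂.2| ^ (α / 2)))
    (hbH : ∀ z₁ ∈ Q, ∀ z₂ ∈ Q,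
      |b z₁ - b z₂| ≤ K₀ * (‖z₁.1 - z₂.1‖ ^ α + |z₁.2 - z₂.2| ^ (α / 2))) :
    ∃ C > 0, ∀ z₁ ∈ Q, ∀ z₂ ∈ Q, ‖z₁.1 - z₂.1‖ + |z₁.2 - z₂.2| ≤ 1 →
      ∀ ξ : EuclideanSpace ℝ (Fin N),
        ‖(((a z₁ + ε) * (ε ^ 2 + ‖ξ‖ ^ 2) ^ ((p z₁ - 2) / 2)
              + (b z₁ + ε) * (ε ^ 2 + ‖ξ‖ ^ 2) ^ ((q z₁ - 2) / 2)) • ξ)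
          - (((a z₂ + ε) * (ε ^ 2 + ‖ξ‖ ^ 2) ^ ((p z₂ - 2) / 2)
              + (b z₂ + ε) * (ε ^ 2 + ‖ξ‖ ^ 2) ^ ((q z₂ - 2) / 2)) • ξ)‖
        ≤ C * (‖z₁.1 - z₂.1‖ ^ α + |z₁.2 - z₂.2| ^ (α / 2))
            * (1 + Real.log (1 + ‖ξ‖ ^ 2)) * (1 + ‖ξ‖ ^ (M - 1)) := by
  obtain ⟨hε0, hε1⟩ := hε
  obtain ⟨hα0, hα1⟩ := hα
  set B := (|K₀| + (|K| + 1) * |L| * (2 * |Real.log ε| + 1)) * 2 ^ (M - 1) with hB_def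
  have hB : 0 ≤ B := by
    have h1 : (0:ℝ) ≤ 2 ^ (M - 1) := Real.rpow_nonneg (by norm_num) _
    have h2 : (0:ℝ) ≤ (|K| + 1) * |L| * (2 * |Real.log ε| + 1) := by positivity
    have h3 := abs_nonneg K₀
    nlinarith
  refine ⟨2 * B + 1, by linarith, ?_⟩
  intro z₁ hz₁ z₂ hz₂ hdist ξ
  set t := ‖ξ‖ with ht_def
  have ht : 0 ≤ t := norm_nonneg _
  set d := ‖z₁.1 - z₂.1‖ + |z₁.2 - z₂.2| with hd_def
  set D := ‖z₁.1 - z₂.1‖ ^ α + |z₁.2 - z₂.2| ^ (α / 2) with hD_def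
  have hd : 0 ≤ d := by rw [hd_def]; positivity
  have hD : 0 ≤ D := by rw [hD_def]; positivity
  have hdD : d ≤ D := by
    rw [hd_def] at hdist
    rw [hd_def, hD_def]
    have hx1 : ‖z₁.1 - z₂.1‖ ≤ 1 := by
      have := abs_nonneg (z₁.2 - z₂.2); linarith
    have ht1 : |z₁.2 - z₂.2| ≤ 1 := by
      have := norm_nonneg (z₁.1 - z₂.1); linarith
    have h1 : ‖z₁.1 - z₂.1‖ ≤ ‖z₁.1 - z₂.1‖ ^ α :=
      aux_self_le_rpow (norm_nonneg _) hx1 hα0 hα1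
    have h2 : |z₁.2 - z₂.2| ≤ |z₁.2 - z₂.2| ^ (α / 2) :=
      aux_self_le_rpow (abs_nonneg _) ht1 (by linarith) (by linarith)
    linarith
  obtain ⟨hp₁m, hp₁M⟩ := hp z₁ hz₁
  obtain ⟨hp₂m, hp₂M⟩ := hp z₂ hz₂
  obtain ⟨hq₁m, hq₁M⟩ := hq z₁ hz₁
  obtain ⟨hq₂m, hq₂M⟩ := hq z₂ hz₂
  obtain ⟨ha₂0, ha₂K⟩ := ha z₂ hz₂
  obtain ⟨hb₂0, hb₂K⟩ := hb z₂ hz₂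
  have hterm_a := aux_term_bound (p₁ := p z₁) (p₂ := p z₂) (a₁ := a z₁) (a₂ := a z₂)
    hε0 hε1.le ht (by linarith) hp₁M (by linarith) hp₂M ha₂0 ha₂K hD hd hdD
    (hpL z₁ hz₁ z₂ hz₂) (haH z₁ hz₁ z₂ hz₂)
  have hterm_b := aux_term_bound (p₁ := q z₁) (p₂ := q z₂) (a₁ := b z₁) (a₂ := b z₂)
    hε0 hε1.le ht (by linarith) hq₁M (by linarith) hq₂M hb₂0 hb₂K hD hd hdD
    (hqL z₁ hz₁ z₂ hz₂) (hbH z₁ hz₁ z₂ hz₂)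
  set c₁ := (a z₁ + ε) * (ε ^ 2 + t ^ 2) ^ ((p z₁ - 2) / 2)
      + (b z₁ + ε) * (ε ^ 2 + t ^ 2) ^ ((q z₁ - 2) / 2) with hc₁_def
  set c₂ := (a z₂ + ε) * (ε ^ 2 + t ^ 2) ^ ((p z₂ - 2) / 2)
      + (b z₂ + ε) * (ε ^ 2 + t ^ 2) ^ ((q z₂ - 2) / 2) with hc₂_def
  have hnorm : ‖c₁ • ξ - c₂ • ξ‖ = |c₁ - c₂| * t := by
    rw [← sub_smul, norm_smul, Real.norm_eq_abs]
  have htri : |c₁ - c₂| * t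
      ≤ |(a z₁ + ε) * (ε ^ 2 + t ^ 2) ^ ((p z₁ - 2) / 2)
          - (a z₂ + ε) * (ε ^ 2 + t ^ 2) ^ ((p z₂ - 2) / 2)| * t
        + |(b z₁ + ε) * (ε ^ 2 + t ^ 2) ^ ((q z₁ - 2) / 2)
          - (b z₂ + ε) * (ε ^ 2 + t ^ 2) ^ ((q z₂ - 2) / 2)| * t := by
    have h := abs_add_le
      ((a z₁ + ε) * (ε ^ 2 + t ^ 2) ^ ((p z₁ - 2) / 2)
        - (a z₂ + ε) * (ε ^ 2 + t ^ 2) ^ ((p z₂ - 2) / 2))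
      ((b z₁ + ε) * (ε ^ 2 + t ^ 2) ^ ((q z₁ - 2) / 2)
        - (b z₂ + ε) * (ε ^ 2 + t ^ 2) ^ ((q z₂ - 2) / 2))
    have heq : c₁ - c₂ = ((a z₁ + ε) * (ε ^ 2 + t ^ 2) ^ ((p z₁ - 2) / 2)
        - (a z₂ + ε) * (ε ^ 2 + t ^ 2) ^ ((p z₂ - 2) / 2))
      + ((b z₁ + ε) * (ε ^ 2 + t ^ 2) ^ ((q z₁ - 2) / 2)
        - (b z₂ + ε) * (ε ^ 2 + t ^ 2) ^ ((q z₂ - 2) / 2)) := by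
      rw [hc₁_def, hc₂_def]; ring
    rw [heq]
    exact (mul_le_mul_of_nonneg_right h ht).trans_eq (by ring)
  have hX : 0 ≤ D * (1 + Real.log (1 + t ^ 2)) * (1 + t ^ (M - 1)) := by
    have hG : 0 ≤ Real.log (1 + t ^ 2) := Real.log_nonneg (by nlinarith)
    have htM : 0 ≤ t ^ (M - 1) := Real.rpow_nonneg ht _
    exact mul_nonneg (mul_nonneg hD (by linarith)) (by linarith)
  rw [← hB_def] at hterm_a hterm_b
  calc ‖c₁ • ξ - c₂ • ξ‖ = |c₁ - c₂| * t := hnorm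
    _ ≤ B * D * (1 + Real.log (1 + t ^ 2)) * (1 + t ^ (M - 1))
        + B * D * (1 + Real.log (1 + t ^ 2)) * (1 + t ^ (M - 1)) :=
        le_trans htri (add_le_add hterm_a hterm_b)
    _ = (2 * B) * (D * (1 + Real.log (1 + t ^ 2)) * (1 + t ^ (M - 1))) := by ring
    _ ≤ (2 * B + 1) * (D * (1 + Real.log (1 + t ^ 2)) * (1 + t ^ (M - 1))) := by
        nlinarith
    _ = (2 * B + 1) * D * (1 + Real.log (1 + t ^ 2)) * (1 + t ^ (M - 1)) := by ring
end
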